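/- Let p(x,ξ) = |ξ|² − |∇φ(x)|² and q(x,ξ) = 2∇φ(x)·ξ, where φ(x) = (1/2)·log|x − x₀|². Then the Poisson bracket {p,q}(x,ξ) = ∇_ξ p·∇ₓ q − ∇ₓ p·∇_ξ q vanishes at every point (x,ξ) with x ≠ x₀ where p(x,ξ) = 0 and q(x,ξ) = 0. -/

import Mathlib

open scoped RealInnerProductSpace

section helpers
variable {F : Type*} [NormedAddCommGroup F] [InnerProductSpace ℝ F] [CompleteSpace F]

lemma hasGradientAt_of_inner {f : F → ℝ} {L : F →L[ℝ] ℝ} {g x : F}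
    (h : HasFDerivAt f L x) (hL : ∀ v, L v = ⟪g, v⟫) : HasGradientAt f g x := by
  rw [hasGradientAt_iff_hasFDerivAt]
  convert h using 1
  all_goals try rfl
  ext v
  rw [InnerProductSpace.toDual_apply_apply, hL v]

lemma hasGradientAt_inner_sub (w ξ x : F) :
    HasGradientAt (fun y => ⟪y - w, ξ⟫) ξ x := by
  apply hasGradientAt_of_inner
    (((hasFDerivAt_id x).sub_const w).inner ℝ (hasFDerivAt_const ξ x))
  intro v
  simp [fderivInnerCLM_apply, real_inner_comm]

lemma hasGradientAt_inner_left (g x : F) :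
    HasGradientAt (fun η => ⟪g, η⟫) g x := by
  apply hasGradientAt_of_inner
    ((hasFDerivAt_const g x).inner ℝ (hasFDerivAt_id x))
  intro v
  simp [fderivInnerCLM_apply]

lemma hasGradientAt_normSq_sub (w x : F) :
    HasGradientAt (fun y => ‖y - w‖ ^ 2) ((2 : ℝ) • (x - w)) x := by
  have h : (fun y : F => ‖y - w‖ ^ 2) = fun y => ⟪y - w, y - w⟫ := by
    funext y; rw [real_inner_self_eq_norm_sq]
  rw [h]
  apply hasGradientAt_of_inner
    (((hasFDerivAt_id x).sub_const w).inner ℝ ((hasFDerivAt_id x).sub_const w))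
  intro v
  simp [fderivInnerCLM_apply, real_inner_smul_left]
  rw [real_inner_comm]
  ring

lemma hasGradientAt_comp {f : F → ℝ} {g x : F} {h : ℝ → ℝ} {c : ℝ}
    (hh : HasDerivAt h c (f x)) (hf : HasGradientAt f g x) :
    HasGradientAt (fun y => h (f y)) (c • g) x := by
  apply hasGradientAt_of_inner (hh.comp_hasFDerivAt x hf.hasFDerivAt)
  intro v
  simp [real_inner_smul_left, InnerProductSpace.toDual_apply_apply]

lemma HasGradientAt.mul' {f g : F → ℝ} {gf gg : F} {x : F}
    (hf : HasGradientAt f gf x) (hg : HasGradientAt g gg x) :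
    HasGradientAt (fun y => f y * g y) (f x • gg + g x • gf) x := by
  apply hasGradientAt_of_inner (hf.hasFDerivAt.mul hg.hasFDerivAt)
  intro v
  simp [inner_add_left, real_inner_smul_left, InnerProductSpace.toDual_apply_apply]


lemma HasGradientAt.const_mul' {f : F → ℝ} {g : F} {x : F} (c : ℝ)
    (hf : HasGradientAt f g x) :
    HasGradientAt (fun y => c * f y) (c • g) x := by
  apply hasGradientAt_of_inner (hf.hasFDerivAt.const_mul c)
  intro v
  simp [real_inner_smul_left, InnerProductSpace.toDual_apply_apply]

lemma HasGradientAt.const_sub' {f : F → ℝ} {g : F} {x : F} (c : ℝ)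
    (hf : HasGradientAt f g x) :
    HasGradientAt (fun y => c - f y) (-g) x := by
  apply hasGradientAt_of_inner (hf.hasFDerivAt.const_sub c)
  intro v
  simp [InnerProductSpace.toDual_apply_apply]

lemma HasGradientAt.sub_const' {f : F → ℝ} {g : F} {x : F} (c : ℝ)
    (hf : HasGradientAt f g x) :
    HasGradientAt (fun y => f y - c) g x := by
  apply hasGradientAt_of_inner (hf.hasFDerivAt.sub_const c)
  intro v
  simp [InnerProductSpace.toDual_apply_apply]

end helpers

theorem stmt_7 (n : ℕ) (x₀ : EuclideanSpace ℝ (Fin n))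
    (φ : EuclideanSpace ℝ (Fin n) → ℝ)
    (hφ : ∀ x, φ x = (1/2) * Real.log (‖x - x₀‖^2))
    (p q : EuclideanSpace ℝ (Fin n) → EuclideanSpace ℝ (Fin n) → ℝ)
    (hp : ∀ x ξ, p x ξ = ‖ξ‖^2 - ‖gradient φ x‖^2)
    (hq : ∀ x ξ, q x ξ = 2 * ⟪gradient φ x, ξ⟫) :
    ∀ x ξ, x ≠ x₀ → p x ξ = 0 → q x ξ = 0 →
      ⟪gradient (fun η => p x η) ξ, gradient (fun y => q y ξ) x⟫
        - ⟪gradient (fun y => p y ξ) x, gradient (fun η => q x η) ξ⟫ = 0 := by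
  intro x ξ hx hp0 hq0
  -- notation
  set v : EuclideanSpace ℝ (Fin n) := x - x₀ with hv
  have hvne : v ≠ 0 := sub_ne_zero.mpr hx
  set u : ℝ := ‖v‖ ^ 2 with hu
  have hupos : 0 < u := pow_pos (norm_pos_iff.mpr hvne) 2
  have hune : u ≠ 0 := ne_of_gt hupos
  -- gradient of φ at any y ≠ x₀
  have gradφ : ∀ y : EuclideanSpace ℝ (Fin n), y ≠ x₀ →
      HasGradientAt φ ((‖y - x₀‖ ^ 2)⁻¹ • (y - x₀)) y := by
    intro y hy
    have hyne : y - x₀ ≠ 0 := sub_ne_zero.mpr hy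
    have hyu : (‖y - x₀‖ : ℝ) ^ 2 ≠ 0 := ne_of_gt (pow_pos (norm_pos_iff.mpr hyne) 2)
    have h1 : HasGradientAt (fun z => ‖z - x₀‖ ^ 2) ((2 : ℝ) • (y - x₀)) y :=
      hasGradientAt_normSq_sub x₀ y
    have h2 : HasGradientAt (fun z => Real.log (‖z - x₀‖ ^ 2))
        ((‖y - x₀‖ ^ 2)⁻¹ • ((2 : ℝ) • (y - x₀))) y :=
      hasGradientAt_comp (Real.hasDerivAt_log hyu) h1
    have h3 := h2.const_mul' (1/2)
    have hfun : (fun z => (1/2 : ℝ) * Real.log (‖z - x₀‖ ^ 2)) = φ := by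
      funext z; rw [hφ z]
    rw [hfun] at h3
    convert h3 using 1
    rw [smul_smul, smul_smul]
    congr 1
    field_simp
  have hgφ : gradient φ x = u⁻¹ • v := (gradφ x hx).gradient
  -- the eventual set
  have hmem : {y : EuclideanSpace ℝ (Fin n) | y ≠ x₀} ∈ nhds x :=
    isOpen_ne.mem_nhds hx
  -- gradient in ξ of p x ·
  have G1 : gradient (fun η => p x η) ξ = (2 : ℝ) • ξ := by
    have : HasGradientAt (fun η => p x η) ((2 : ℝ) • ξ) ξ := by
      have h1 : HasGradientAt (fun η : EuclideanSpace ℝ (Fin n) => ‖η‖ ^ 2 - ‖gradient φ x‖ ^ 2)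
          ((2 : ℝ) • ξ) ξ := by
        have := (hasGradientAt_normSq_sub (0 : EuclideanSpace ℝ (Fin n)) ξ).sub_const'
          (‖gradient φ x‖ ^ 2)
        simpa using this
      have hfun : (fun η => p x η) =
          fun η : EuclideanSpace ℝ (Fin n) => ‖η‖ ^ 2 - ‖gradient φ x‖ ^ 2 := by
        funext η; rw [hp]
      rw [hfun]; exact h1
    exact this.gradient
  -- gradient in ξ of q x ·
  have G2 : gradient (fun η => q x η) ξ = (2 * u⁻¹) • v := by
    have : HasGradientAt (fun η => q x η) ((2 * u⁻¹) • v) ξ := by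
      have h1 := (hasGradientAt_inner_left (gradient φ x) ξ).const_mul' 2
      have hfun : (fun η => q x η) = fun η => 2 * ⟪gradient φ x, η⟫ := by
        funext η; rw [hq]
      rw [hfun]
      convert h1 using 1
      rw [hgφ, smul_smul]
    exact this.gradient
  -- gradient in x of p · ξ
  have G3 : gradient (fun y => p y ξ) x = (2 * (u ^ 2)⁻¹) • v := by
    have key : HasGradientAt (fun y => ‖ξ‖ ^ 2 - (‖y - x₀‖ ^ 2)⁻¹)
        ((2 * (u ^ 2)⁻¹) • v) x := by
      have h1 : HasGradientAt (fun y => (‖y - x₀‖ ^ 2)⁻¹)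
          ((-(u ^ 2)⁻¹) • ((2 : ℝ) • v)) x :=
        hasGradientAt_comp (hasDerivAt_inv hune) (hasGradientAt_normSq_sub x₀ x)
      have h2 := h1.const_sub' (‖ξ‖ ^ 2)
      convert h2 using 1
      rw [smul_smul, ← neg_smul]
      congr 1
      ring
    have heq : (fun y => p y ξ) =ᶠ[nhds x] fun y => ‖ξ‖ ^ 2 - (‖y - x₀‖ ^ 2)⁻¹ := by
      filter_upwards [hmem] with y hy
      rw [hp]
      congr 1
      rw [(gradφ y hy).gradient, norm_smul]
      have : (0:ℝ) < ‖y - x₀‖ ^ 2 := pow_pos (norm_pos_iff.mpr (sub_ne_zero.mpr hy)) 2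
      rw [Real.norm_eq_abs, abs_inv, abs_of_pos this]
      field_simp
    exact (key.congr_of_eventuallyEq heq).gradient
  -- gradient in x of q · ξ
  have G4 : gradient (fun y => q y ξ) x =
      (2 * u⁻¹) • ξ + (2 * ⟪v, ξ⟫ * (-(u ^ 2)⁻¹) * 2) • v := by
    have key : HasGradientAt (fun y => 2 * ((‖y - x₀‖ ^ 2)⁻¹ * ⟪y - x₀, ξ⟫))
        ((2 * u⁻¹) • ξ + (2 * ⟪v, ξ⟫ * (-(u ^ 2)⁻¹) * 2) • v) x := by
      have h1 : HasGradientAt (fun y => (‖y - x₀‖ ^ 2)⁻¹)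
          ((-(u ^ 2)⁻¹) • ((2 : ℝ) • v)) x :=
        hasGradientAt_comp (hasDerivAt_inv hune) (hasGradientAt_normSq_sub x₀ x)
      have h2 := (h1.mul' (hasGradientAt_inner_sub x₀ ξ x)).const_mul' 2
      convert h2 using 1
      rw [smul_add, smul_smul, smul_smul, smul_smul, smul_smul]
    have heq : (fun y => q y ξ) =ᶠ[nhds x]
        fun y => 2 * ((‖y - x₀‖ ^ 2)⁻¹ * ⟪y - x₀, ξ⟫) := by
      filter_upwards [hmem] with y hy
      rw [hq, (gradφ y hy).gradient, real_inner_smul_left]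
    exact (key.congr_of_eventuallyEq heq).gradient
  -- the constraints
  have hξ2 : ‖ξ‖ ^ 2 = u⁻¹ := by
    have := hp0
    rw [hp, hgφ, norm_smul, Real.norm_eq_abs, abs_inv, abs_of_pos hupos] at this
    have h' : ‖ξ‖ ^ 2 = (|u|⁻¹ * ‖v‖) ^ 2 := by
      rw [abs_of_pos hupos]; linarith [this]
    rw [abs_of_pos hupos] at h'
    rw [h', mul_pow, ← hu]
    field_simp
  have hvξ : ⟪v, ξ⟫ = 0 := by
    rw [hq, hgφ, real_inner_smul_left] at hq0
    have : u⁻¹ * ⟪v, ξ⟫ = 0 := by linarith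
    rcases mul_eq_zero.mp this with h | h
    · exact absurd h (inv_ne_zero hune)
    · exact h
  -- final computation
  rw [G1, G2, G3, G4]
  simp only [inner_add_right, real_inner_smul_left, real_inner_smul_right,
    real_inner_self_eq_norm_sq, real_inner_comm ξ v]
  have hvξ' : ⟪ξ, v⟫ = 0 := by rw [real_inner_comm]; exact hvξ
  rw [hvξ', hξ2, ← hu]
  field_simp
  ring
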